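/- Let m ≥ 1 and d ≥ 1 be integers with d < 4m² + 4m, and let δ > 1 satisfy (1 + δ²)/(δ² − 1) > 2m + 1. If X is a set of n points in ℝ^d such that the distance between any two distinct points of X is either 1 or δ, then n ≤ (d+1)·4m(m+1)/(4m² + 4m − d) + 1. -/

import Mathlib

open Finset

set_option maxHeartbeats 1000000

lemma two_dist_key (d n : ℕ) (hd : 1 ≤ d) (hn : 2 ≤ n) (δ : ℝ) (hδ : 1 < δ)
    (p : Fin n → EuclideanSpace ℝ (Fin d))
    (hpd : ∀ i j : Fin n, i ≠ j → dist (p i) (p j) = 1 ∨ dist (p i) (p j) = δ) :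
    ((d : ℝ) + 1) * ((n : ℝ) - 1) * (4 * δ ^ 2) ≤ (d : ℝ) * (n : ℝ) * (1 + δ ^ 2) ^ 2 := by
  classical
  have hn0 : (0:ℝ) < (n:ℝ) := by
    have : 0 < n := lt_of_lt_of_le (by norm_num) hn
    exact_mod_cast this
  set c : EuclideanSpace ℝ (Fin d) := (n:ℝ)⁻¹ • ∑ i, p i with hc
  set q : Fin n → EuclideanSpace ℝ (Fin d) := fun i => p i - c with hqdef
  have hq0 : ∑ i, q i = 0 := by
    have h1 : ∑ i : Fin n, q i = (∑ i, p i) - (n : ℕ) • c := by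
      simp [hqdef, Finset.sum_sub_distrib]
    rw [h1, hc]
    rw [← Nat.cast_smul_eq_nsmul ℝ n, smul_smul, mul_inv_cancel₀ (ne_of_gt hn0), one_smul,
      sub_self]
  set g : Fin n → Fin n → ℝ := fun i j => inner ℝ (q i) (q j) with hg
  have hgsymm : ∀ i j, g i j = g j i := fun i j => real_inner_comm _ _
  have hgrow : ∀ i, ∑ j, g i j = 0 := by
    intro i
    have : ∑ j, g i j = inner ℝ (q i) (∑ j, q j) := by
      simp [hg, inner_sum]
    rw [this, hq0, inner_zero_right]
  set r : Fin n → ℝ := fun i => g i i with hr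
  set R : ℝ := ∑ i, r i with hR
  set D : Fin n → Fin n → ℝ := fun i j => dist (p i) (p j) ^ 2 with hDdef
  have hDg : ∀ i j, D i j = r i + r j - 2 * g i j := by
    intro i j
    have h1 : dist (p i) (p j) = ‖q i - q j‖ := by
      rw [dist_eq_norm, hqdef]; simp
    have h2 := norm_sub_sq_real (q i) (q j)
    have h3 : r i = ‖q i‖ ^ 2 := real_inner_self_eq_norm_sq _
    have h4 : r j = ‖q j‖ ^ 2 := real_inner_self_eq_norm_sq _
    rw [hDdef]; simp only []
    rw [h1, h2, h3, h4]; simp only [hg]; ring_nf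
  -- coordinates
  have hgcoord : ∀ i j, g i j = ∑ k, q i k * q j k := by
    intro i j
    rw [hg]
    simp [PiLp.inner_apply, RCLike.inner_apply, mul_comm]
  set w : Fin d → Fin d → ℝ := fun k l => ∑ i, q i k * q i l with hw
  set T2 : ℝ := ∑ i, ∑ j, (g i j) ^ 2 with hT2
  -- Step A : R^2 ≤ d * T2
  have hA1 : R = ∑ k, w k k := by
    rw [hR, hw]
    rw [Finset.sum_comm]
    refine Finset.sum_congr rfl fun i _ => ?_
    rw [hr]; simp only []
    rw [hgcoord]
  have hFub : ∀ i j, (g i j) ^ 2 = ∑ k, ∑ l, (q i k * q i l) * (q j k * q j l) := by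
    intro i j
    rw [hgcoord, sq, Finset.sum_mul_sum]
    exact Finset.sum_congr rfl fun k _ => Finset.sum_congr rfl fun l _ => by ring
  have hFub2 : ∀ k l, (w k l) ^ 2 = ∑ i, ∑ j, (q i k * q i l) * (q j k * q j l) := by
    intro k l
    rw [hw]; simp only []
    rw [sq, Finset.sum_mul_sum]
  have hA2 : T2 = ∑ k, ∑ l, (w k l) ^ 2 := by
    rw [hT2]
    simp only [hFub, hFub2]
    calc ∑ i, ∑ j, ∑ k, ∑ l, (q i k * q i l) * (q j k * q j l)
        = ∑ i, ∑ k, ∑ j, ∑ l, (q i k * q i l) * (q j k * q j l) :=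
          Finset.sum_congr rfl fun i _ => Finset.sum_comm
      _ = ∑ k, ∑ i, ∑ j, ∑ l, (q i k * q i l) * (q j k * q j l) := Finset.sum_comm
      _ = ∑ k, ∑ i, ∑ l, ∑ j, (q i k * q i l) * (q j k * q j l) :=
          Finset.sum_congr rfl fun k _ => Finset.sum_congr rfl fun i _ => Finset.sum_comm
      _ = ∑ k, ∑ l, ∑ i, ∑ j, (q i k * q i l) * (q j k * q j l) :=
          Finset.sum_congr rfl fun k _ => Finset.sum_comm
  have stepA : R ^ 2 ≤ (d : ℝ) * T2 := by
    have h1 : (∑ k, w k k) ^ 2 ≤ (d : ℝ) * ∑ k, (w k k) ^ 2 := by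
      have := Finset.sum_mul_sq_le_sq_mul_sq Finset.univ (fun _ : Fin d => (1:ℝ))
        (fun k => w k k)
      simpa [Finset.card_univ] using this
    have h2 : ∑ k, (w k k) ^ 2 ≤ ∑ k, ∑ l, (w k l) ^ 2 :=
      Finset.sum_le_sum fun k _ =>
        Finset.single_le_sum (f := fun l => (w k l) ^ 2) (fun _ _ => sq_nonneg _)
          (Finset.mem_univ k)
    rw [hA1, hA2]
    have hd0 : (0:ℝ) ≤ (d:ℝ) := Nat.cast_nonneg d
    exact h1.trans (by nlinarith [h2, hd0])
  -- algebraic identities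
  set Q : ℝ := ∑ i, ∑ j, (D i j) ^ 2 with hQ
  set r2 : ℝ := ∑ i, (r i) ^ 2 with hr2d
  have hd0 : (0:ℝ) ≤ (d:ℝ) := Nat.cast_nonneg d
  have hcross1 : ∑ i, ∑ j, r i * g i j = 0 := by
    refine Finset.sum_eq_zero fun i _ => ?_
    rw [← Finset.mul_sum, hgrow, mul_zero]
  have hcross2 : ∑ i, ∑ j, r j * g i j = 0 := by
    rw [Finset.sum_comm]
    refine Finset.sum_eq_zero fun j _ => ?_
    have h1 : ∑ i, r j * g i j = r j * ∑ i, g j i := by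
      rw [Finset.mul_sum]
      exact Finset.sum_congr rfl fun i _ => by rw [hgsymm]
    rw [h1, hgrow, mul_zero]
  have e1 : ∑ i, ∑ j : Fin n, (r i) ^ 2 = (n:ℝ) * r2 := by
    simp [Finset.sum_const, Finset.card_univ, hr2d, Finset.mul_sum]
  have e2 : ∑ i : Fin n, ∑ j, (r j) ^ 2 = (n:ℝ) * r2 := by
    rw [Finset.sum_comm]
    simp [Finset.sum_const, Finset.card_univ, hr2d, Finset.mul_sum]
  have e3 : ∑ i, ∑ j, r i * r j = R * R := by
    simp only [← Finset.mul_sum]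
    rw [← Finset.sum_mul, hR]
  have expand : ∀ i j, (D i j) ^ 2 =
      (r i) ^ 2 + (r j) ^ 2 + 2 * (r i * r j) - 4 * (r i * g i j) - 4 * (r j * g i j)
        + 4 * (g i j) ^ 2 := by
    intro i j; rw [hDg i j]; ring
  have hQT : Q = 2 * (n:ℝ) * r2 + 2 * R ^ 2 + 4 * T2 := by
    calc Q = ∑ i, ∑ j, ((r i) ^ 2 + (r j) ^ 2 + 2 * (r i * r j) - 4 * (r i * g i j)
          - 4 * (r j * g i j) + 4 * (g i j) ^ 2) := by
          rw [hQ]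
          exact Finset.sum_congr rfl fun i _ => Finset.sum_congr rfl fun j _ => expand i j
      _ = (∑ i, ∑ j : Fin n, (r i) ^ 2) + (∑ i : Fin n, ∑ j, (r j) ^ 2)
          + 2 * (∑ i, ∑ j, r i * r j) - 4 * (∑ i, ∑ j, r i * g i j)
          - 4 * (∑ i, ∑ j, r j * g i j) + 4 * (∑ i, ∑ j, (g i j) ^ 2) := by
          simp only [Finset.sum_add_distrib, Finset.sum_sub_distrib, Finset.mul_sum]
      _ = 2 * (n:ℝ) * r2 + 2 * R ^ 2 + 4 * T2 := by
          rw [e1, e2, e3, hcross1, hcross2, ← hT2]; ring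
  have hr2R : R ^ 2 ≤ (n:ℝ) * r2 := by
    have := Finset.sum_mul_sq_le_sq_mul_sq Finset.univ (fun _ : Fin n => (1:ℝ)) r
    simpa [Finset.card_univ, hR, hr2d] using this
  have hcomb : ((d:ℝ) + 1) * R ^ 2 ≤ (d:ℝ) * Q / 4 := by nlinarith [stepA, hQT, hr2R, hd0]
  -- linear relations from the two-distance condition
  have hS1 : ∑ i, ∑ j, D i j = 2 * (n:ℝ) * R := by
    have inner : ∀ i, ∑ j, D i j = (n:ℝ) * r i + R := by
      intro i
      calc ∑ j, D i j = ∑ j, (r i + r j - 2 * g i j) :=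
            Finset.sum_congr rfl fun j _ => hDg i j
        _ = (n:ℝ) * r i + R := by
            rw [Finset.sum_sub_distrib, Finset.sum_add_distrib, Finset.sum_const,
              Finset.card_univ, ← Finset.mul_sum, hgrow, ← hR]
            simp [nsmul_eq_mul]
    calc ∑ i, ∑ j, D i j = ∑ i, ((n:ℝ) * r i + R) :=
          Finset.sum_congr rfl fun i _ => inner i
      _ = 2 * (n:ℝ) * R := by
          rw [Finset.sum_add_distrib, ← Finset.mul_sum, ← hR, Finset.sum_const,
            Finset.card_univ]
          simp [nsmul_eq_mul]
          ring
  have hind : ∑ i : Fin n, ∑ j, (if i = j then (0:ℝ) else 1) = (n:ℝ) ^ 2 - n := by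
    have inner : ∀ i : Fin n, ∑ j, (if i = j then (0:ℝ) else 1) = (n:ℝ) - 1 := by
      intro i
      calc ∑ j, (if i = j then (0:ℝ) else 1)
          = ∑ j, ((1:ℝ) - if i = j then 1 else 0) :=
            Finset.sum_congr rfl fun j _ => by by_cases h : i = j <;> simp [h]
        _ = (n:ℝ) - 1 := by
            rw [Finset.sum_sub_distrib]
            simp [Finset.sum_ite_eq, Finset.card_univ]
    calc ∑ i : Fin n, ∑ j, (if i = j then (0:ℝ) else 1)
        = ∑ i : Fin n, ((n:ℝ) - 1) := Finset.sum_congr rfl fun i _ => inner i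
      _ = (n:ℝ) ^ 2 - n := by
          rw [Finset.sum_const, Finset.card_univ]
          simp [nsmul_eq_mul]
          ring
  have hquad : ∀ i j, (D i j) ^ 2 = (1 + δ ^ 2) * D i j
      - δ ^ 2 * (if i = j then (0:ℝ) else 1) := by
    intro i j
    by_cases h : i = j
    · subst h; simp [hDdef, dist_self]
    · rw [if_neg h]
      rcases hpd i j h with h1 | h1 <;> simp only [hDdef] <;> rw [h1] <;> ring
  have hQlin : Q = (1 + δ ^ 2) * (2 * (n:ℝ) * R) - δ ^ 2 * ((n:ℝ) ^ 2 - n) := by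
    calc Q = ∑ i, ∑ j, ((1 + δ ^ 2) * D i j - δ ^ 2 * (if i = j then (0:ℝ) else 1)) := by
          rw [hQ]
          exact Finset.sum_congr rfl fun i _ => Finset.sum_congr rfl fun j _ => hquad i j
      _ = (1 + δ ^ 2) * (∑ i, ∑ j, D i j)
          - δ ^ 2 * (∑ i : Fin n, ∑ j, (if i = j then (0:ℝ) else 1)) := by
          simp only [Finset.sum_sub_distrib, Finset.mul_sum]
      _ = _ := by rw [hS1, hind]
  have hn2 : (2:ℝ) ≤ (n:ℝ) := by exact_mod_cast hn
  have hNpos : (0:ℝ) < (n:ℝ) ^ 2 - n := by nlinarith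
  have hRpos : 0 < R := by
    have h1 : (n:ℝ) ^ 2 - n ≤ ∑ i, ∑ j, D i j := by
      rw [← hind]
      refine Finset.sum_le_sum fun i _ => Finset.sum_le_sum fun j _ => ?_
      by_cases h : i = j
      · subst h; simp [hDdef, dist_self]
      · rw [if_neg h]
        rcases hpd i j h with h1 | h1 <;> simp only [hDdef] <;> rw [h1] <;> nlinarith
    rw [hS1] at h1
    nlinarith
  have hδ0 : (0:ℝ) < δ ^ 2 := by positivity
  have hQub : 4 * δ ^ 2 * ((n:ℝ) ^ 2 - n) * Q ≤ (1 + δ ^ 2) ^ 2 * (2 * (n:ℝ) * R) ^ 2 := by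
    rw [hQlin]
    nlinarith [sq_nonneg ((1 + δ ^ 2) * (2 * (n:ℝ) * R) - 2 * δ ^ 2 * ((n:ℝ) ^ 2 - n))]
  have hfin : (((d:ℝ) + 1) * ((n:ℝ) - 1) * (4 * δ ^ 2)) * ((n:ℝ) * R ^ 2)
      ≤ ((d:ℝ) * (n:ℝ) * (1 + δ ^ 2) ^ 2) * ((n:ℝ) * R ^ 2) := by
    have hstep1 : (((d:ℝ) + 1) * R ^ 2) * (4 * δ ^ 2 * ((n:ℝ) ^ 2 - n))
        ≤ ((d:ℝ) * Q / 4) * (4 * δ ^ 2 * ((n:ℝ) ^ 2 - n)) :=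
      mul_le_mul_of_nonneg_right hcomb (by positivity)
    have hstep2 : ((d:ℝ) * Q / 4) * (4 * δ ^ 2 * ((n:ℝ) ^ 2 - n))
        = ((d:ℝ) / 4) * (4 * δ ^ 2 * ((n:ℝ) ^ 2 - n) * Q) := by ring
    have hstep3 : ((d:ℝ) / 4) * (4 * δ ^ 2 * ((n:ℝ) ^ 2 - n) * Q)
        ≤ ((d:ℝ) / 4) * ((1 + δ ^ 2) ^ 2 * (2 * (n:ℝ) * R) ^ 2) :=
      mul_le_mul_of_nonneg_left hQub (by positivity)
    calc (((d:ℝ) + 1) * ((n:ℝ) - 1) * (4 * δ ^ 2)) * ((n:ℝ) * R ^ 2)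
        = (((d:ℝ) + 1) * R ^ 2) * (4 * δ ^ 2 * ((n:ℝ) ^ 2 - n)) := by ring
      _ ≤ ((d:ℝ) * Q / 4) * (4 * δ ^ 2 * ((n:ℝ) ^ 2 - n)) := hstep1
      _ = ((d:ℝ) / 4) * (4 * δ ^ 2 * ((n:ℝ) ^ 2 - n) * Q) := hstep2
      _ ≤ ((d:ℝ) / 4) * ((1 + δ ^ 2) ^ 2 * (2 * (n:ℝ) * R) ^ 2) := hstep3
      _ = ((d:ℝ) * (n:ℝ) * (1 + δ ^ 2) ^ 2) * ((n:ℝ) * R ^ 2) := by ring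
  exact le_of_mul_le_mul_right hfin (by positivity)

/-- for a two-distance set in `ℝ^d` with distances `1, δ` and
`(1+δ²)/(δ²-1) > 2m+1`, `d < 4m²+4m`, one has `n ≤ (d+1)·4m(m+1)/(4m²+4m−d) + 1`. -/
theorem stmt5 (m d : ℕ) (hm : 1 ≤ m) (hd : 1 ≤ d) (hdm : d < 4 * m ^ 2 + 4 * m)
    (δ : ℝ) (hδ : 1 < δ)
    (hγ : (1 + δ ^ 2) / (δ ^ 2 - 1) > 2 * (m : ℝ) + 1)
    (n : ℕ) (X : Finset (EuclideanSpace ℝ (Fin d))) (hcard : X.card = n)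
    (htwo : ∀ p ∈ X, ∀ q ∈ X, p ≠ q → dist p q = 1 ∨ dist p q = δ) :
    (n : ℝ) ≤ ((d : ℝ) + 1) * (4 * (m : ℝ) * ((m : ℝ) + 1)) /
      (4 * (m : ℝ) ^ 2 + 4 * (m : ℝ) - (d : ℝ)) + 1 := by
  classical
  set cR : ℝ := 4 * (m : ℝ) ^ 2 + 4 * (m : ℝ) with hcR
  have hm1 : (1:ℝ) ≤ (m:ℝ) := by exact_mod_cast hm
  have hd1 : (1:ℝ) ≤ (d:ℝ) := by exact_mod_cast hd
  have hcd : (d:ℝ) < cR := by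
    rw [hcR]; push_cast
    exact_mod_cast (by exact_mod_cast hdm : ((d:ℕ):ℝ) < ((4 * m ^ 2 + 4 * m : ℕ) : ℝ))
  have hcpos : (0:ℝ) < cR - d := by linarith
  have hnum : ((d : ℝ) + 1) * (4 * (m : ℝ) * ((m : ℝ) + 1)) = ((d:ℝ) + 1) * cR := by
    rw [hcR]; ring
  have hcRpos : (0:ℝ) < cR := by nlinarith
  -- the target right-hand side is at least 3
  have hRHS3 : (3:ℝ) ≤ ((d : ℝ) + 1) * (4 * (m : ℝ) * ((m : ℝ) + 1)) / (cR - (d:ℝ)) + 1 := by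
    rw [hnum]
    have h2 : (2:ℝ) ≤ ((d:ℝ) + 1) * cR / (cR - d) := by
      rw [le_div_iff₀ hcpos]
      nlinarith
    linarith
  rcases le_or_gt n 3 with hn3 | hn3
  · have : (n:ℝ) ≤ 3 := by exact_mod_cast hn3
    linarith
  -- main case : n ≥ 4
  have hn2 : 2 ≤ n := by omega
  set p : Fin n → EuclideanSpace ℝ (Fin d) :=
    fun i => ((X.equivFinOfCardEq hcard).symm i : EuclideanSpace ℝ (Fin d)) with hp
  have hpmem : ∀ i, p i ∈ X := fun i => ((X.equivFinOfCardEq hcard).symm i).2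
  have hpinj : Function.Injective p := by
    intro i j h
    have : (X.equivFinOfCardEq hcard).symm i = (X.equivFinOfCardEq hcard).symm j :=
      Subtype.ext h
    exact (X.equivFinOfCardEq hcard).symm.injective this
  have hpd : ∀ i j : Fin n, i ≠ j → dist (p i) (p j) = 1 ∨ dist (p i) (p j) = δ :=
    fun i j hij => htwo _ (hpmem i) _ (hpmem j) fun h => hij (hpinj h)
  have key := two_dist_key d n hd hn2 δ hδ p hpd
  -- arithmetic conclusion
  have hδ2 : (0:ℝ) < δ ^ 2 - 1 := by nlinarith
  have hγ' : (2 * (m:ℝ) + 1) * (δ ^ 2 - 1) < 1 + δ ^ 2 := by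
    have := (lt_div_iff₀ hδ2).mp hγ
    linarith
  have hsq : ((2 * (m:ℝ) + 1) * (δ ^ 2 - 1)) ^ 2 < (1 + δ ^ 2) ^ 2 := by
    have h0 : (0:ℝ) ≤ (2 * (m:ℝ) + 1) * (δ ^ 2 - 1) := by nlinarith
    exact pow_lt_pow_left₀ hγ' h0 (by norm_num)
  have hc4 : cR * (δ ^ 2 - 1) ^ 2 < 4 * δ ^ 2 := by nlinarith [hsq]
  have hn4 : (4:ℝ) ≤ (n:ℝ) := by exact_mod_cast hn3
  have hδ0 : (0:ℝ) < 4 * δ ^ 2 := by positivity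
  -- divide key by 4δ² after adding the error term
  have h6 : (d:ℝ) * n * (cR * (δ ^ 2 - 1) ^ 2) ≤ (d:ℝ) * n * (4 * δ ^ 2) := by
    have : (0:ℝ) ≤ (d:ℝ) * n := by positivity
    exact mul_le_mul_of_nonneg_left hc4.le this
  have h7 : (cR * (((d:ℝ) + 1) * ((n:ℝ) - 1))) * (4 * δ ^ 2)
      ≤ ((cR * ((d:ℝ) * n) + (d:ℝ) * n)) * (4 * δ ^ 2) := by
    have hkey' : cR * ((((d:ℝ) + 1) * ((n:ℝ) - 1)) * (4 * δ ^ 2))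
        ≤ cR * ((d:ℝ) * (n:ℝ) * (1 + δ ^ 2) ^ 2) :=
      mul_le_mul_of_nonneg_left key hcRpos.le
    nlinarith [h6, hkey']
  have h8 : cR * (((d:ℝ) + 1) * ((n:ℝ) - 1)) ≤ cR * ((d:ℝ) * n) + (d:ℝ) * n :=
    le_of_mul_le_mul_right h7 hδ0
  have h9 : (n:ℝ) * (cR - d) ≤ cR * ((d:ℝ) + 1) := by nlinarith [h8]
  have h10 : (n:ℝ) ≤ ((d:ℝ) + 1) * cR / (cR - d) := by
    rw [le_div_iff₀ hcpos]
    nlinarith [h9]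
  rw [hnum]
  linarith
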